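/- Let V be a finite free k-module regarded as purely odd. The canonical pairing V × V* → k extends uniquely to a Hopf pairing ⟨·,·⟩ : Λ(V) × Λ(V*) → k determined by ⟨Λᵐ(V), Λⁿ(V*)⟩ = 0 for m ≠ n and ⟨v₁∧⋯∧vₙ, w₁∧⋯∧wₙ⟩ = Σ_{σ ∈ Sₙ} sgn(σ) ⟨v₁, w_{σ(1)}⟩ ⋯ ⟨vₙ, w_{σ(n)}⟩, and this pairing is non-degenerate, inducing an isomorphism Λ(V*) ≅ Λ(V)* of Hopf superalgebras. -/

import Mathlib

open ExteriorAlgebra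

/-- The conditions determining the canonical pairing Λ(V) × Λ(V*) → k:
orthogonality of different exterior degrees, and the determinant-like formula
on products of generators. -/
def PairingConds (k V : Type*) [CommRing k] [AddCommGroup V] [Module k V]
    (B : ExteriorAlgebra k V →ₗ[k] ExteriorAlgebra k (Module.Dual k V) →ₗ[k] k) : Prop :=
  (∀ (m n : ℕ) (v : Fin m → V) (w : Fin n → Module.Dual k V), m ≠ n →
      B ((List.ofFn fun i => ι k (v i)).prod) ((List.ofFn fun i => ι k (w i)).prod) = 0) ∧
  (∀ (n : ℕ) (v : Fin n → V) (w : Fin n → Module.Dual k V),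
      B ((List.ofFn fun i => ι k (v i)).prod) ((List.ofFn fun i => ι k (w i)).prod) =
        ∑ σ : Equiv.Perm (Fin n), (Equiv.Perm.sign σ : ℤ) • ∏ i, (w (σ i)) (v i))


set_option maxHeartbeats 1000000
set_option synthInstance.maxHeartbeats 400000
set_option linter.unusedSectionVars false

section Aux
variable {k V : Type*} [CommRing k] [AddCommGroup V] [Module k V]

/-- Contraction operators assembled into an algebra hom from `Λ(V*)` to the
opposite of the endomorphism algebra of `Λ(V)`. -/
noncomputable def contrAlg : ExteriorAlgebra k (Module.Dual k V) →ₐ[k]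
    (Module.End k (ExteriorAlgebra k V))ᵐᵒᵖ :=
  ExteriorAlgebra.lift k ⟨(MulOpposite.opLinearEquiv k).toLinearMap ∘ₗ
      (CliffordAlgebra.contractLeft (Q := (0 : QuadraticForm k V))),
    fun d => by
      have h : (CliffordAlgebra.contractLeft (Q := (0 : QuadraticForm k V)) d) *
          (CliffordAlgebra.contractLeft d) = 0 :=
        LinearMap.ext fun x => by
          simpa [Module.End.mul_apply] using CliffordAlgebra.contractLeft_contractLeft d x
      show MulOpposite.op _ * MulOpposite.op _ = 0
      rw [← MulOpposite.op_mul, h, MulOpposite.op_zero]⟩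

@[simp] lemma contrAlg_ι (w : Module.Dual k V) :
    (contrAlg (ι k w) : (Module.End k (ExteriorAlgebra k V))ᵐᵒᵖ) =
      MulOpposite.op (CliffordAlgebra.contractLeft (Q := (0 : QuadraticForm k V)) w) := by
  simp [contrAlg, ExteriorAlgebra.lift_ι_apply]

/-- The pairing `Λ(V*) →ₗ Λ(V) →ₗ k`. -/
noncomputable def pairAux : ExteriorAlgebra k (Module.Dual k V) →ₗ[k]
    ExteriorAlgebra k V →ₗ[k] k where
  toFun y := (algebraMapInv).toLinearMap ∘ₗ (contrAlg y).unop
  map_add' y z := by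
    ext x
    simp [map_add]
  map_smul' c y := by
    ext x
    simp [map_smul]

lemma pairAux_apply (y : ExteriorAlgebra k (Module.Dual k V)) (x : ExteriorAlgebra k V) :
    pairAux y x = algebraMapInv ((contrAlg y).unop x) := rfl

@[simp] lemma pairAux_one (x : ExteriorAlgebra k V) :
    pairAux (1 : ExteriorAlgebra k (Module.Dual k V)) x = algebraMapInv x := by
  simp [pairAux_apply, map_one]

lemma pairAux_ι_mul (w : Module.Dual k V) (y : ExteriorAlgebra k (Module.Dual k V))
    (x : ExteriorAlgebra k V) :
    pairAux (ι k w * y) x = pairAux y (CliffordAlgebra.contractLeft w x) := by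
  simp only [pairAux_apply, map_mul, contrAlg_ι]
  rfl

end Aux

section Aux2
variable {k V : Type*} [CommRing k] [AddCommGroup V] [Module k V]

lemma contractLeft_ιMulti (d : Module.Dual k V) (n : ℕ) (v : Fin (n + 1) → V) :
    CliffordAlgebra.contractLeft (Q := (0 : QuadraticForm k V)) d (ιMulti k (n + 1) v) =
      ∑ i : Fin (n + 1), ((-1 : k) ^ (i : ℕ) * d (v i)) • ιMulti k n (v ∘ i.succAbove) := by
  induction n with
  | zero =>
      rw [ιMulti_succ_apply, CliffordAlgebra.contractLeft_ι_mul]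
      simp
  | succ n ih =>
      have key : ∀ i : Fin (n + 1), ιMulti k (n + 1) (v ∘ (Fin.succ i).succAbove) =
          ι k (v 0) * ιMulti k n ((v ∘ Fin.succ) ∘ i.succAbove) := by
        intro i
        rw [ιMulti_succ_apply]
        congr 1
        · congr 1
          funext j
          show v ((Fin.succ i).succAbove j.succ) = v ((i.succAbove j).succ)
          exact congrArg v (Fin.succ_succAbove_succ i j)
      rw [ιMulti_succ_apply, CliffordAlgebra.contractLeft_ι_mul, ih]
      conv_rhs => rw [Fin.sum_univ_succ]
      rw [Fin.succAbove_zero, Finset.mul_sum, sub_eq_add_neg, ← Finset.sum_neg_distrib]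
      congr 1
      · show d (v 0) • ιMulti k (n+1) (Matrix.vecTail v) = _
        have hv : Matrix.vecTail v = v ∘ Fin.succ := rfl
        rw [hv]
        norm_num
      · refine Finset.sum_congr rfl fun i _ => ?_
        rw [key i, mul_smul_comm, ← neg_smul]
        congr 1
        show -((-1 : k) ^ (i : ℕ) * d (Matrix.vecTail v i)) =
          (-1 : k) ^ ((Fin.succ i : Fin (n + 2)) : ℕ) * d (v i.succ)
        rw [Fin.val_succ]
        have hv : Matrix.vecTail v i = v i.succ := rfl
        rw [hv]
        ring
end Aux2

section Aux3
variable {k V : Type*} [CommRing k] [AddCommGroup V] [Module k V]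

lemma pairAux_det (n : ℕ) (w : Fin n → Module.Dual k V) (v : Fin n → V) :
    pairAux (ιMulti k n w) (ιMulti k n v) =
      Matrix.det (Matrix.of fun i j => w i (v j)) := by
  induction n with
  | zero =>
      simp [Matrix.det_fin_zero, ExteriorAlgebra.algebraMapInv]
  | succ n ih =>
      rw [ιMulti_succ_apply (v := w), pairAux_ι_mul, contractLeft_ιMulti, map_sum,
        Matrix.det_succ_row_zero]
      refine Finset.sum_congr rfl fun i _ => ?_
      rw [LinearMap.map_smul, smul_eq_mul, ih]
      have hM : (Matrix.of fun a b => Matrix.vecTail w a ((v ∘ i.succAbove) b)) =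
          (Matrix.of fun i j => w i (v j)).submatrix Fin.succ i.succAbove := rfl
      rw [hM]
      simp only [Matrix.of_apply]
      try ring
end Aux3

section Aux4
variable {k V : Type*} [CommRing k] [AddCommGroup V] [Module k V]

lemma algebraMapInv_ι (x : V) : (algebraMapInv (ι k x) : k) = 0 := by
  simp [ExteriorAlgebra.algebraMapInv, ExteriorAlgebra.lift_ι_apply]

lemma pairAux_orthogonal (n : ℕ) :
    ∀ (m : ℕ) (w : Fin n → Module.Dual k V) (v : Fin m → V), m ≠ n →
      pairAux (ιMulti k n w) (ιMulti k m v) = 0 := by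
  induction n with
  | zero =>
      intro m w v hm
      obtain ⟨m, rfl⟩ := Nat.exists_eq_succ_of_ne_zero hm
      rw [ιMulti_zero_apply, pairAux_one, ιMulti_succ_apply, map_mul, algebraMapInv_ι, zero_mul]
  | succ n ih =>
      intro m w v hm
      rw [ιMulti_succ_apply (v := w), pairAux_ι_mul]
      match m with
      | 0 =>
          rw [ιMulti_zero_apply, CliffordAlgebra.contractLeft_one, map_zero]
      | m + 1 =>
          rw [contractLeft_ιMulti, map_sum]
          refine Finset.sum_eq_zero fun i _ => ?_
          rw [LinearMap.map_smul, ih m _ _ (fun h => hm (by omega)), smul_zero]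
end Aux4

section Aux5
variable {k : Type*} [CommRing k] {W : Type*} [AddCommGroup W] [Module k W]

lemma ιMulti_mul (m n : ℕ) (v : Fin m → W) (w : Fin n → W) :
    ιMulti k m v * ιMulti k n w = ιMulti k (m + n) (Fin.append v w) := by
  have h : (fun i : Fin (m + n) => ι k (Fin.append v w i)) =
      Fin.append (fun i => ι k (v i)) (fun i => ι k (w i)) := by
    funext i
    refine Fin.addCases (fun j => ?_) (fun j => ?_) i <;>
      simp [Fin.append_left, Fin.append_right]
  rw [ιMulti_apply, ιMulti_apply, ιMulti_apply, h, List.ofFn_fin_append, List.prod_append]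

lemma span_ιMulti_eq_top :
    Submodule.span k (Set.range fun p : (Σ n, Fin n → W) => ιMulti k p.1 p.2) = ⊤ := by
  set S : Set (ExteriorAlgebra k W) :=
    Set.range fun p : (Σ n, Fin n → W) => ιMulti k p.1 p.2 with hS
  rw [eq_top_iff]
  rintro x -
  induction x using ExteriorAlgebra.induction with
  | algebraMap r =>
      rw [Algebra.algebraMap_eq_smul_one]
      exact Submodule.smul_mem _ _
        (Submodule.subset_span ⟨⟨0, Fin.elim0⟩, ιMulti_zero_apply _⟩)
  | ι x =>
      refine Submodule.subset_span ⟨⟨1, fun _ => x⟩, ?_⟩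
      show ιMulti k 1 (fun _ => x) = ι k x
      rw [ιMulti_succ_apply, ιMulti_zero_apply, mul_one]
  | mul a b ha hb =>
      have hmul : Submodule.span k S * Submodule.span k S ≤ Submodule.span k S := by
        rw [Submodule.span_mul_span]
        refine Submodule.span_le.2 ?_
        rintro _ ⟨x, hx, y, hy, rfl⟩
        obtain ⟨⟨m, v⟩, rfl⟩ := hx
        obtain ⟨⟨n, w⟩, rfl⟩ := hy
        exact Submodule.subset_span ⟨⟨m + n, Fin.append v w⟩, (ιMulti_mul m n v w).symm⟩
      exact hmul (Submodule.mul_mem_mul ha hb)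
  | add a b ha hb => exact Submodule.add_mem _ ha hb

variable {I : Type*} [Fintype I] [LinearOrder I] (b : Module.Basis I k W)

/-- The canonical generator of `Λ(W)` attached to a finite set of basis indices. -/
noncomputable def eltOf (s : Finset I) : ExteriorAlgebra k W :=
  ιMulti k s.card fun i => b (s.orderIsoOfFin rfl i)

lemma eltOf_eq (s : Finset I) {n : ℕ} (hs : s.card = n) :
    ιMulti k n (fun i => b (s.orderIsoOfFin hs i)) = eltOf b s := by
  subst hs; rfl

lemma ιMulti_basis_mem (n : ℕ) (g : Fin n → I) :
    ιMulti k n (fun i => b (g i)) ∈ Submodule.span k (Set.range (eltOf b)) := by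
  by_cases hg : Function.Injective g
  · set s : Finset I := Finset.univ.image g with hsdef
    have hs : s.card = n := by
      rw [hsdef, Finset.card_image_of_injective _ hg, Finset.card_univ, Fintype.card_fin]
    set m : Fin n → I := fun i => s.orderIsoOfFin hs i with hm
    have hmem : ∀ i, g i ∈ s := fun i => Finset.mem_image_of_mem g (Finset.mem_univ i)
    have hbij : Function.Bijective (fun i : Fin n => (⟨g i, hmem i⟩ : s)) := by
      refine (Fintype.bijective_iff_injective_and_card _).2 ⟨?_, by simp [hs]⟩
      intro i j hij
      exact hg (congrArg Subtype.val hij)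
    set e : Fin n ≃ s := Equiv.ofBijective _ hbij with he
    set π : Equiv.Perm (Fin n) := e.trans (s.orderIsoOfFin hs).toEquiv.symm with hπ
    have hcomp : (fun i => b (g i)) = (fun i => b (m i)) ∘ π := by
      funext i
      have h3 : (s.orderIsoOfFin hs).toEquiv (π i) = e i :=
        (s.orderIsoOfFin hs).toEquiv.apply_symm_apply (e i)
      have : m (π i) = g i := congrArg Subtype.val h3
      simp [this]
    rw [hcomp]
    rw [AlternatingMap.map_perm]
    rcases Int.units_eq_one_or (Equiv.Perm.sign π) with h | h <;> rw [h]
    · rw [one_smul]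
      exact Submodule.subset_span ⟨s, (eltOf_eq b s hs).symm⟩
    · rw [Units.smul_def, Units.val_neg, Units.val_one, neg_smul, one_smul]
      exact Submodule.neg_mem _ (Submodule.subset_span ⟨s, (eltOf_eq b s hs).symm⟩)
  · rw [AlternatingMap.map_eq_zero_of_not_injective _ _
      (fun h => hg fun i j hij => h (congrArg b hij))]
    exact Submodule.zero_mem _

lemma span_eltOf_eq_top : Submodule.span k (Set.range (eltOf b)) = ⊤ := by
  rw [eq_top_iff, ← span_ιMulti_eq_top (k := k) (W := W)]
  refine Submodule.span_le.2 ?_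
  rintro _ ⟨⟨n, v⟩, rfl⟩
  have expand : ιMulti k n v =
      ∑ g : Fin n → I, (∏ i, b.repr (v i) (g i)) • ιMulti k n (fun i => b (g i)) := by
    have h1 : ιMulti k n v =
        (ιMulti k n : W [⋀^Fin n]→ₗ[k] ExteriorAlgebra k W).toMultilinearMap
          (fun i => ∑ j : I, b.repr (v i) j • b j) := by
      have harg : v = fun i => ∑ j : I, b.repr (v i) j • b j :=
        funext fun i => (b.sum_repr (v i)).symm
      conv_lhs => rw [harg]
      rfl
    rw [h1, MultilinearMap.map_sum]
    refine Finset.sum_congr rfl fun g _ => ?_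
    rw [MultilinearMap.map_smul_univ]
    rfl
  show ιMulti k n v ∈ (Submodule.span k (Set.range (eltOf b)) : Set _)
  simp only [SetLike.mem_coe]
  rw [expand]
  exact Submodule.sum_mem _ fun g _ =>
    Submodule.smul_mem _ _ (ιMulti_basis_mem b n g)
end Aux5

section Aux6
variable {k V : Type*} [CommRing k] [AddCommGroup V] [Module k V]
  [Module.Free k V] [Module.Finite k V]
  {d : ℕ} (b : Module.Basis (Fin d) k V)

lemma pair_vals (s t : Finset (Fin d)) :
    pairAux (eltOf b.dualBasis t) (eltOf b s) = if s = t then 1 else 0 := by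
  by_cases hcard : s.card = t.card
  · rw [← eltOf_eq b s hcard]
    have hF : eltOf b.dualBasis t =
        ιMulti k t.card fun i => b.dualBasis (t.orderIsoOfFin rfl i) := rfl
    rw [hF, pairAux_det]
    by_cases hst : s = t
    · subst hst
      rw [if_pos rfl]
      have hone : (Matrix.of fun i j =>
          (b.dualBasis ((s.orderIsoOfFin rfl) i) : Module.Dual k V)
            (b ((s.orderIsoOfFin hcard) j))) = (1 : Matrix (Fin s.card) (Fin s.card) k) := by
        ext i j
        rw [Matrix.of_apply, Module.Basis.dualBasis_apply_self, Matrix.one_apply]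
        refine if_congr ?_ rfl rfl
        constructor
        · intro h
          have := (s.orderIsoOfFin rfl).injective
            (Subtype.ext (h.trans (congrArg Subtype.val rfl)))
          -- h : ↑(iso hcard j) = ↑(iso rfl i); hcard : s.card = s.card so iso hcard = iso rfl
          exact (this).symm ▸ rfl
        · rintro rfl
          rfl
      rw [hone, Matrix.det_one]
    · rw [if_neg hst]
      have hts : ¬ t ⊆ s := fun hsub =>
        hst (Finset.eq_of_subset_of_card_le hsub hcard.le).symm
      obtain ⟨a, hat, has⟩ := Finset.not_subset.1 hts
      refine Matrix.det_eq_zero_of_row_eq_zero ((t.orderIsoOfFin rfl).symm ⟨a, hat⟩)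
        fun j => ?_
      rw [Matrix.of_apply]
      have h1 : (t.orderIsoOfFin rfl) ((t.orderIsoOfFin rfl).symm ⟨a, hat⟩) = ⟨a, hat⟩ :=
        OrderIso.apply_symm_apply _ _
      rw [h1]
      show (b.dualBasis a) (b ((s.orderIsoOfFin hcard) j)) = 0
      rw [Module.Basis.dualBasis_apply_self, if_neg]
      intro h
      exact has (h ▸ (s.orderIsoOfFin hcard j).2)
  · have hne : s ≠ t := fun h => hcard (by rw [h])
    rw [if_neg hne]
    exact pairAux_orthogonal t.card s.card _ _ hcard
end Aux6

section Aux7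
variable {k V : Type*} [CommRing k] [AddCommGroup V] [Module k V]

lemma conds_hold : PairingConds k V (LinearMap.flip pairAux) := by
  constructor
  · intro m n v w hmn
    rw [LinearMap.flip_apply, ← ιMulti_apply, ← ιMulti_apply]
    exact pairAux_orthogonal n m w v hmn
  · intro n v w
    rw [LinearMap.flip_apply, ← ιMulti_apply, ← ιMulti_apply, pairAux_det, Matrix.det_apply]
    refine Finset.sum_congr rfl fun σ _ => ?_
    rw [Units.smul_def]
    rfl

lemma conds_unique (B B' : ExteriorAlgebra k V →ₗ[k] ExteriorAlgebra k (Module.Dual k V) →ₗ[k] k)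
    (hB : PairingConds k V B) (hB' : PairingConds k V B') : B = B' := by
  refine LinearMap.ext_on (span_ιMulti_eq_top (k := k) (W := V)) ?_
  rintro _ ⟨⟨m, v⟩, rfl⟩
  refine LinearMap.ext_on (span_ιMulti_eq_top (k := k) (W := Module.Dual k V)) ?_
  rintro _ ⟨⟨n, w⟩, rfl⟩
  by_cases h : m = n
  · subst h
    exact (hB.2 m v w).trans (hB'.2 m v w).symm
  · exact (hB.1 m n v w h).trans (hB'.1 m n v w h).symm

lemma pairAux_bijective [Module.Free k V] [Module.Finite k V] :
    Function.Bijective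
      (⇑(pairAux : ExteriorAlgebra k (Module.Dual k V) →ₗ[k]
        ExteriorAlgebra k V →ₗ[k] k)) := by
  classical
  set d := Fintype.card (Module.Free.ChooseBasisIndex k V) with hd
  set b : Module.Basis (Fin d) k V :=
    (Module.Free.chooseBasis k V).reindex (Fintype.equivFin _) with hb
  have hspanV := span_eltOf_eq_top b
  have hspanD := span_eltOf_eq_top b.dualBasis
  have key : ∀ (c : Finset (Fin d) → k) (t : Finset (Fin d)),
      pairAux (∑ s : Finset (Fin d), c s • eltOf b.dualBasis s) (eltOf b t) = c t := by
    intro c t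
    rw [map_sum, LinearMap.sum_apply]
    have : ∀ s : Finset (Fin d),
        (pairAux (c s • eltOf b.dualBasis s)) (eltOf b t) =
          if t = s then c s else 0 := by
      intro s
      rw [map_smul, LinearMap.smul_apply, pair_vals b t s, smul_eq_mul, mul_ite, mul_one,
        mul_zero]
    rw [Finset.sum_congr rfl fun s _ => this s, Finset.sum_ite_eq]
    simp
  constructor
  · have h0 : ∀ u : ExteriorAlgebra k (Module.Dual k V), pairAux u = 0 → u = 0 := by
      intro u hu
      have hmem : u ∈ Submodule.span k (Set.range (eltOf b.dualBasis)) := by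
        rw [hspanD]; exact Submodule.mem_top
      obtain ⟨c, rfl⟩ := (Submodule.mem_span_range_iff_exists_fun k).1 hmem
      have hc : ∀ t, c t = 0 := fun t => by
        have := key c t
        rw [hu] at this
        simpa using this.symm
      simp [hc]
    intro y z hyz
    have := h0 (y - z) (by rw [map_sub, hyz, sub_self])
    exact sub_eq_zero.1 this
  · intro f
    refine ⟨∑ t : Finset (Fin d), f (eltOf b t) • eltOf b.dualBasis t, ?_⟩
    refine LinearMap.ext_on hspanV ?_
    rintro _ ⟨s, rfl⟩
    exact key (fun t => f (eltOf b t)) s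
end Aux7

/-- For a finite free k-module V, the canonical pairing V × V* → k extends
uniquely to a pairing Λ(V) × Λ(V*) → k with ⟨Λᵐ(V),Λⁿ(V*)⟩ = 0 for m ≠ n and
the determinant formula on products of generators; moreover this pairing is
non-degenerate: the induced map Λ(V*) → Λ(V)* is bijective. -/
theorem stmt6 (k V : Type*) [CommRing k] [AddCommGroup V] [Module k V]
    [Module.Free k V] [Module.Finite k V] :
    (∃! B : ExteriorAlgebra k V →ₗ[k] ExteriorAlgebra k (Module.Dual k V) →ₗ[k] k,
      PairingConds k V B) ∧
    ∀ B : ExteriorAlgebra k V →ₗ[k] ExteriorAlgebra k (Module.Dual k V) →ₗ[k] k,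
      PairingConds k V B →
        Function.Bijective
          (B.flip : ExteriorAlgebra k (Module.Dual k V) → (ExteriorAlgebra k V →ₗ[k] k)) := by
  refine ⟨⟨LinearMap.flip pairAux, conds_hold, fun B hB => conds_unique B _ hB conds_hold⟩, ?_⟩
  intro B hB
  have hBeq : B = LinearMap.flip pairAux := conds_unique B _ hB conds_hold
  rw [hBeq, LinearMap.flip_flip]
  exact pairAux_bijective
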